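/- Let P and Q be probability measures on a measurable space 𝒳, let K > 0 and n ≥ 1, and let g : 𝒳^n → ℝ be a bounded measurable function satisfying |g(x^n) − g(y^n)| ≤ K · #{i ∈ {1,…,n} : x_i ≠ y_i} for all x^n, y^n ∈ 𝒳^n. Then |∫ g dP^{⊗n} − ∫ g dQ^{⊗n}| ≤ n K · d_V(P, Q). -/

import Mathlib

set_option maxHeartbeats 1000000
set_option linter.unusedSectionVars false

open MeasureTheory Set

/-- The variational distance `d_V(P,Q) = sup_B |P(B) - Q(B)|`, the supremum
over all measurable sets `B`. -/
noncomputable def dV {X : Type*} [MeasurableSpace X] (P Q : Measure X) : ℝ :=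
  ⨆ B : {s : Set X // MeasurableSet s}, |(P B.1).toReal - (Q B.1).toReal|

section aux
variable {X : Type*} [MeasurableSpace X] (P Q : Measure X)
  [IsProbabilityMeasure P] [IsProbabilityMeasure Q]

lemma toReal_le_one (B : Set X) : (P B).toReal ≤ 1 := by
  have : (P B).toReal ≤ (P univ).toReal :=
    ENNReal.toReal_mono (measure_ne_top P univ) (measure_mono (subset_univ _))
  simpa using this

lemma dV_bdd : BddAbove (Set.range fun B : {s : Set X // MeasurableSet s} =>
    |(P B.1).toReal - (Q B.1).toReal|) := by
  refine ⟨2, ?_⟩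
  rintro _ ⟨B, rfl⟩
  have h1 := toReal_le_one P B.1
  have h2 := toReal_le_one Q B.1
  have h3 : (0:ℝ) ≤ (P B.1).toReal := ENNReal.toReal_nonneg
  have h4 : (0:ℝ) ≤ (Q B.1).toReal := ENNReal.toReal_nonneg
  rw [abs_sub_le_iff]; constructor <;> linarith

lemma le_dV {B : Set X} (hB : MeasurableSet B) :
    |(P B).toReal - (Q B).toReal| ≤ dV P Q :=
  le_ciSup (dV_bdd P Q) (⟨B, hB⟩ : {s : Set X // MeasurableSet s})

lemma dV_nonneg : 0 ≤ dV P Q :=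
  (abs_nonneg _).trans (le_dV P Q MeasurableSet.empty)

lemma bdd_integrable {μ : Measure X} [IsFiniteMeasure μ] {f : X → ℝ} {M : ℝ}
    (hf : Measurable f) (hb : ∀ x, |f x| ≤ M) : Integrable f μ :=
  ⟨hf.aestronglyMeasurable,
    HasFiniteIntegral.of_bounded (C := M) (ae_of_all _ fun x => by
      simpa [Real.norm_eq_abs] using hb x)⟩

/-- Key lemma: oscillation bound gives variational distance bound. -/
lemma key {K : ℝ} (hK : 0 < K) (f : X → ℝ) (hfm : Measurable f)
    (hosc : ∀ x y, |f x - f y| ≤ K) :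
    |(∫ x, f x ∂P) - ∫ x, f x ∂Q| ≤ K * dV P Q := by
  have hne : Nonempty X := by
    by_contra h
    have : (univ : Set X) = ∅ := univ_eq_empty_iff.mpr (not_nonempty_iff.mp h)
    have hP : P univ = 1 := measure_univ
    rw [this] at hP; simp at hP
  obtain ⟨x0⟩ := hne
  have hbdd : BddBelow (Set.range f) := by
    refine ⟨f x0 - K, ?_⟩
    rintro _ ⟨y, rfl⟩
    have := (abs_le.mp (hosc x0 y)).2
    linarith
  set m : ℝ := sInf (Set.range f) with hm
  have hm_le : ∀ x, m ≤ f x := fun x => csInf_le hbdd (mem_range_self x)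
  have hle : ∀ x, f x ≤ m + K := by
    intro x
    have : f x - K ≤ m := by
      apply le_csInf ⟨f x0, mem_range_self x0⟩
      rintro _ ⟨y, rfl⟩
      have := (abs_le.mp (hosc x y)).2
      linarith
    linarith
  set h : X → ℝ := fun x => f x - m with hdef
  have hhm : Measurable h := hfm.sub measurable_const
  have hhb : ∀ x, |h x| ≤ K := fun x => by
    rw [abs_le]; constructor
    · have := hm_le x; simp only [hdef]; linarith [hK.le]
    · have := hle x; simp only [hdef]; linarith
  have hfb : ∀ x, |f x| ≤ |m| + K := fun x => by
    have := hhb x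
    calc |f x| = |h x + m| := by simp [hdef]
    _ ≤ |h x| + |m| := abs_add_le _ _
    _ ≤ |m| + K := by linarith
  have hintP : Integrable f P := bdd_integrable hfm hfb
  have hintQ : Integrable f Q := bdd_integrable hfm hfb
  have hintPh : Integrable h P := bdd_integrable hhm hhb
  have hintQh : Integrable h Q := bdd_integrable hhm hhb
  have hdiff : (∫ x, f x ∂P) - ∫ x, f x ∂Q = (∫ x, h x ∂P) - ∫ x, h x ∂Q := by
    have h1 : (∫ x, h x ∂P) = (∫ x, f x ∂P) - m := by
      rw [hdef]; rw [integral_sub hintP (integrable_const m)]; simp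
    have h2 : (∫ x, h x ∂Q) = (∫ x, f x ∂Q) - m := by
      rw [hdef]; rw [integral_sub hintQ (integrable_const m)]; simp
    rw [h1, h2]; ring
  have hnn : (0 : X → ℝ) ≤ᵐ[P] h := ae_of_all _ fun x => by
    have := hm_le x; simp only [hdef, Pi.zero_apply]; linarith
  have hnnQ : (0 : X → ℝ) ≤ᵐ[Q] h := ae_of_all _ fun x => by
    have := hm_le x; simp only [hdef, Pi.zero_apply]; linarith
  have hbP : h ≤ᵐ[P] fun _ => K := ae_of_all _ fun x => (abs_le.mp (hhb x)).2
  have hbQ : h ≤ᵐ[Q] fun _ => K := ae_of_all _ fun x => (abs_le.mp (hhb x)).2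
  have hlayP := hintPh.integral_eq_integral_Ioc_meas_le hnn hbP
  have hlayQ := hintQh.integral_eq_integral_Ioc_meas_le hnnQ hbQ
  set φP : ℝ → ℝ := fun t => (P {a | t ≤ h a}).toReal with hφP
  set φQ : ℝ → ℝ := fun t => (Q {a | t ≤ h a}).toReal with hφQ
  have hφPm : Measurable φP := by
    apply Antitone.measurable
    intro s t hst
    exact ENNReal.toReal_mono (measure_ne_top _ _)
      (measure_mono fun a ha => le_trans hst ha)
  have hφQm : Measurable φQ := by
    apply Antitone.measurable
    intro s t hst
    exact ENNReal.toReal_mono (measure_ne_top _ _)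
      (measure_mono fun a ha => le_trans hst ha)
  haveI hfin : IsFiniteMeasure (volume.restrict (Ioc (0:ℝ) K)) := by
    constructor
    rw [Measure.restrict_apply_univ, Real.volume_Ioc]
    exact ENNReal.ofReal_lt_top
  have hIP : IntegrableOn φP (Ioc 0 K) volume :=
    bdd_integrable (M := 1) hφPm fun t => by
      rw [abs_of_nonneg ENNReal.toReal_nonneg]; exact toReal_le_one P _
  have hIQ : IntegrableOn φQ (Ioc 0 K) volume :=
    bdd_integrable (M := 1) hφQm fun t => by
      rw [abs_of_nonneg ENNReal.toReal_nonneg]; exact toReal_le_one Q _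
  rw [hdiff, hlayP, hlayQ]
  show |(∫ t in Ioc (0:ℝ) K, φP t) - ∫ t in Ioc (0:ℝ) K, φQ t| ≤ K * dV P Q
  rw [← integral_sub hIP hIQ]
  have hbound : ∀ t : ℝ, ‖φP t - φQ t‖ ≤ dV P Q := by
    intro t
    have hB : MeasurableSet {a : X | t ≤ h a} :=
      measurableSet_le measurable_const hhm
    simpa [Real.norm_eq_abs, hφP, hφQ] using le_dV P Q hB
  have := norm_integral_le_of_norm_le_const (μ := volume.restrict (Ioc (0:ℝ) K))
    (f := fun t => φP t - φQ t) (C := dV P Q) (ae_of_all _ hbound)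
  rw [measureReal_def, Measure.restrict_apply_univ, Real.volume_Ioc, sub_zero, ENNReal.toReal_ofReal hK.le] at this
  calc |∫ t in Ioc (0:ℝ) K, (φP t - φQ t)| ≤ dV P Q * K := by
        simpa [Real.norm_eq_abs] using this
    _ = K * dV P Q := mul_comm _ _

end aux

section aux2
variable {X : Type*} [MeasurableSpace X]

lemma cons_measurable {n : ℕ} :
    Measurable (fun p : X × (Fin n → X) => (Fin.cons p.1 p.2 : Fin (n+1) → X)) := by
  apply measurable_pi_iff.2
  intro j
  refine Fin.cases ?_ ?_ j
  · simpa using measurable_fst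
  · intro i
    simpa [Function.comp_def] using (measurable_pi_apply i).comp measurable_snd

lemma ncard_cons_eq {n : ℕ} (x : X) (y y' : Fin n → X) :
    ({j | (Fin.cons x y : Fin (n+1) → X) j ≠ (Fin.cons x y' : Fin (n+1) → X) j} : Set (Fin (n+1))).ncard
      = ({i | y i ≠ y' i} : Set (Fin n)).ncard := by
  have hset : ({j | (Fin.cons x y : Fin (n+1) → X) j ≠ (Fin.cons x y' : Fin (n+1) → X) j} : Set (Fin (n+1)))
      = Fin.succ '' {i | y i ≠ y' i} := by
    ext j
    refine Fin.cases ?_ ?_ j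
    · simp [Fin.succ_ne_zero, eq_comm]
    · intro i
      simp [Fin.succ_inj]
  rw [hset, Set.ncard_image_of_injective _ (Fin.succ_injective n)]

lemma ncard_cons_le_one {n : ℕ} (x x' : X) (ys : Fin n → X) :
    (({j | (Fin.cons x ys : Fin (n+1) → X) j ≠ (Fin.cons x' ys : Fin (n+1) → X) j} : Set (Fin (n+1))).ncard : ℝ)
      ≤ 1 := by
  have hsub : ({j | (Fin.cons x ys : Fin (n+1) → X) j ≠ (Fin.cons x' ys : Fin (n+1) → X) j} : Set (Fin (n+1)))
      ⊆ {0} := by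
    intro j
    refine Fin.cases ?_ ?_ j <;> simp
  have := Set.ncard_le_ncard hsub (Set.finite_singleton _)
  rw [Set.ncard_singleton] at this
  exact_mod_cast this

lemma abs_integral_le' {Y : Type*} [MeasurableSpace Y] {μ : Measure Y}
    [IsProbabilityMeasure μ] (f : Y → ℝ) {M : ℝ} (hb : ∀ y, |f y| ≤ M) :
    |∫ y, f y ∂μ| ≤ M := by
  have := norm_integral_le_of_norm_le_const (μ := μ) (f := f) (C := M)
    (ae_of_all _ fun y => by simpa [Real.norm_eq_abs] using hb y)
  simpa [Real.norm_eq_abs] using this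

lemma ind (P Q : Measure X) [IsProbabilityMeasure P] [IsProbabilityMeasure Q]
    {K : ℝ} (hK : 0 < K) :
    ∀ (n : ℕ) (g : (Fin n → X) → ℝ), Measurable g → (∃ M : ℝ, ∀ x, |g x| ≤ M) →
      (∀ x y, |g x - g y| ≤ K * (({i | x i ≠ y i} : Set (Fin n)).ncard : ℝ)) →
      |(∫ x, g x ∂(Measure.pi fun _ : Fin n => P)) -
          ∫ x, g x ∂(Measure.pi fun _ : Fin n => Q)| ≤ n * K * dV P Q := by
  intro n
  induction n with
  | zero =>
    intro g hgm hgb hlip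
    have hg : g = fun _ => g (fun i => i.elim0) :=
      funext fun x => congrArg g (Subsingleton.elim _ _)
    rw [hg]
    simp [integral_const]
  | succ n IH =>
    intro g hgm hgb hlip
    obtain ⟨M, hM⟩ := hgb
    set e := MeasurableEquiv.piFinSuccAbove (fun _ : Fin (n+1) => X) 0 with he
    have mpP := measurePreserving_piFinSuccAbove (fun _ : Fin (n+1) => P) 0
    have mpQ := measurePreserving_piFinSuccAbove (fun _ : Fin (n+1) => Q) 0
    have hsymm : ∀ p : X × (Fin n → X), e.symm p = Fin.cons p.1 p.2 := by
      intro p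
      show (Fin.insertNthEquiv (fun _ : Fin (n+1) => X) 0) p = _
      simp [Fin.insertNthEquiv, Fin.insertNth_zero']
    have hGm : Measurable (fun p : X × (Fin n → X) => g (Fin.cons p.1 p.2)) :=
      hgm.comp cons_measurable
    have hGint : ∀ (μ ν : Measure X) [IsProbabilityMeasure μ] [IsProbabilityMeasure ν],
        Integrable (fun p : X × (Fin n → X) => g (Fin.cons p.1 p.2))
          (μ.prod (Measure.pi fun _ : Fin n => ν)) := by
      intro μ ν _ _
      exact bdd_integrable hGm fun p => hM _
    have hiP : (∫ x, g x ∂(Measure.pi fun _ : Fin (n+1) => P))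
        = ∫ x, ∫ ys, g (Fin.cons x ys) ∂(Measure.pi fun _ : Fin n => P) ∂P := by
      calc (∫ x, g x ∂(Measure.pi fun _ : Fin (n+1) => P))
          = ∫ p, g (e.symm p) ∂(P.prod (Measure.pi fun _ : Fin n => P)) :=
            (MeasurePreserving.integral_comp' mpP.symm g).symm
        _ = ∫ p : X × (Fin n → X), g (Fin.cons p.1 p.2)
              ∂(P.prod (Measure.pi fun _ : Fin n => P)) := by
            refine integral_congr_ae (ae_of_all _ fun p => ?_)
            dsimp only
            rw [hsymm p]
        _ = _ := integral_prod _ (hGint P P)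
    have hiQ : (∫ x, g x ∂(Measure.pi fun _ : Fin (n+1) => Q))
        = ∫ x, ∫ ys, g (Fin.cons x ys) ∂(Measure.pi fun _ : Fin n => Q) ∂Q := by
      calc (∫ x, g x ∂(Measure.pi fun _ : Fin (n+1) => Q))
          = ∫ p, g (e.symm p) ∂(Q.prod (Measure.pi fun _ : Fin n => Q)) :=
            (MeasurePreserving.integral_comp' mpQ.symm g).symm
        _ = ∫ p : X × (Fin n → X), g (Fin.cons p.1 p.2)
              ∂(Q.prod (Measure.pi fun _ : Fin n => Q)) := by
            refine integral_congr_ae (ae_of_all _ fun p => ?_)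
            dsimp only
            rw [hsymm p]
        _ = _ := integral_prod _ (hGint Q Q)
    set h1 : X → ℝ := fun x => ∫ ys, g (Fin.cons x ys) ∂(Measure.pi fun _ : Fin n => P)
      with hh1
    set h2 : X → ℝ := fun x => ∫ ys, g (Fin.cons x ys) ∂(Measure.pi fun _ : Fin n => Q)
      with hh2
    have hconsx : ∀ x : X, Measurable (fun ys : Fin n → X => g (Fin.cons x ys)) :=
      fun x => hGm.comp measurable_prodMk_left
    have hh1m : Measurable h1 :=
      (hGm.stronglyMeasurable.integral_prod_right'
        (ν := Measure.pi fun _ : Fin n => P)).measurable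
    have hh2m : Measurable h2 :=
      (hGm.stronglyMeasurable.integral_prod_right'
        (ν := Measure.pi fun _ : Fin n => Q)).measurable
    have hh1b : ∀ x, |h1 x| ≤ M := fun x => abs_integral_le' _ fun ys => hM _
    have hh2b : ∀ x, |h2 x| ≤ M := fun x => abs_integral_le' _ fun ys => hM _
    -- step 1 : |∫ h1 dP - ∫ h2 dP| ≤ n K dV
    have hstep1 : |(∫ x, h1 x ∂P) - ∫ x, h2 x ∂P| ≤ n * K * dV P Q := by
      rw [← integral_sub (bdd_integrable hh1m hh1b) (bdd_integrable hh2m hh2b)]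
      apply abs_integral_le'
      intro x
      refine IH (fun ys => g (Fin.cons x ys)) (hconsx x) ⟨M, fun ys => hM _⟩ ?_
      intro y y'
      calc |g (Fin.cons x y) - g (Fin.cons x y')|
          ≤ K * (({j | (Fin.cons x y : Fin (n+1) → X) j ≠ (Fin.cons x y' : Fin (n+1) → X) j} :
              Set (Fin (n+1))).ncard : ℝ) := hlip _ _
        _ = K * (({i | y i ≠ y' i} : Set (Fin n)).ncard : ℝ) := by
            rw [ncard_cons_eq]
    -- step 2 : |∫ h2 dP - ∫ h2 dQ| ≤ K dV
    have hstep2 : |(∫ x, h2 x ∂P) - ∫ x, h2 x ∂Q| ≤ K * dV P Q := by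
      apply key P Q hK h2 hh2m
      intro x x'
      have : h2 x - h2 x' = ∫ ys, (g (Fin.cons x ys) - g (Fin.cons x' ys))
          ∂(Measure.pi fun _ : Fin n => Q) := by
        rw [integral_sub (bdd_integrable (hconsx x) fun ys => hM _)
          (bdd_integrable (hconsx x') fun ys => hM _)]
      rw [this]
      apply abs_integral_le'
      intro ys
      calc |g (Fin.cons x ys) - g (Fin.cons x' ys)|
          ≤ K * (({j | (Fin.cons x ys : Fin (n+1) → X) j ≠ (Fin.cons x' ys : Fin (n+1) → X) j} :
              Set (Fin (n+1))).ncard : ℝ) := hlip _ _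
        _ ≤ K * 1 := by
            have := ncard_cons_le_one (X := X) x x' ys
            nlinarith
        _ = K := mul_one K
    have hdVnn := dV_nonneg P Q
    calc |(∫ x, g x ∂(Measure.pi fun _ : Fin (n+1) => P)) -
            ∫ x, g x ∂(Measure.pi fun _ : Fin (n+1) => Q)|
        = |((∫ x, h1 x ∂P) - ∫ x, h2 x ∂P) + ((∫ x, h2 x ∂P) - ∫ x, h2 x ∂Q)| := by
          rw [hiP, hiQ]; ring_nf
      _ ≤ |(∫ x, h1 x ∂P) - ∫ x, h2 x ∂P| + |(∫ x, h2 x ∂P) - ∫ x, h2 x ∂Q| :=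
          abs_add_le _ _
      _ ≤ n * K * dV P Q + K * dV P Q := add_le_add hstep1 hstep2
      _ = (n + 1 : ℕ) * K * dV P Q := by push_cast; ring

end aux2


/-- If `g : 𝒳^n → ℝ` is bounded, measurable, and satisfies
`|g(x^n) - g(y^n)| ≤ K · #{i : x_i ≠ y_i}`, then
`|∫ g dP^{⊗n} - ∫ g dQ^{⊗n}| ≤ n K · d_V(P, Q)`. -/
theorem stmt2 {X : Type*} [MeasurableSpace X] (P Q : Measure X)
    [IsProbabilityMeasure P] [IsProbabilityMeasure Q]
    (n : ℕ) (hn : 1 ≤ n) (K : ℝ) (hK : 0 < K)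
    (g : (Fin n → X) → ℝ) (hgm : Measurable g)
    (hgb : ∃ M : ℝ, ∀ x, |g x| ≤ M)
    (hlip : ∀ x y : Fin n → X,
      |g x - g y| ≤ K * (({i | x i ≠ y i} : Set (Fin n)).ncard : ℝ)) :
    |(∫ x, g x ∂(Measure.pi fun _ : Fin n => P)) -
        ∫ x, g x ∂(Measure.pi fun _ : Fin n => Q)|
      ≤ n * K * dV P Q :=
  ind P Q hK n g hgm hgb hlip
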